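/- Fix N ∈ ℕ, an N × p real matrix X with rank p, β ∈ ℝ^p, and a vector ε ∈ ℝ^N; set Y = Xβ + ε. Let probabilities π_1,…,π_N satisfy π_j > 0 and ∑_j π_j = 1, and for each r let I_1,…,I_r be i.i.d. with P(I_i = j) = π_j, w_j^{(r)} = (1/r) ∑_{i=1}^r 1{I_i = j}/π_j, and W_r = diag(w^{(r)}). On the event that X^T W_r X is invertible define β̂_{W_r} = (X^T W_r X)^{-1} X^T W_r Y, H_{W_r} = X (X^T W_r X)^{-1} X^T W_r, and V_r = (X^T W_r X)^{-1} X^T W_r² X (X^T W_r X)^{-1}. Then, almost surely, as r → ∞: (i) β̂_{W_r} → β̂_{OLS} = (X^T X)^{-1} X^T Y; (ii) ‖(I − H_{W_r}) ε‖₂² → ‖(I − H) ε‖₂² where H = X(X^T X)^{-1} X^T; and (iii) (V_r)_{jj} → ((X^T X)^{-1})_{jj} for each j. -/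

import Mathlib

open MeasureTheory ProbabilityTheory Matrix Filter


-- invertibility of XᵀX from full column rank
lemma isUnit_XtX {N p : ℕ} (X : Matrix (Fin N) (Fin p) ℝ) (hrank : X.rank = p) :
    IsUnit (Xᵀ * X) := by
  have hr : (Xᵀ * X).rank = p := by rw [Matrix.rank_transpose_mul_self, hrank]
  have h1 : Module.finrank ℝ (LinearMap.range (Xᵀ * X).mulVecLin) = p := hr
  have htop : LinearMap.range (Xᵀ * X).mulVecLin = ⊤ := by
    apply Submodule.eq_top_of_finrank_eq
    rw [h1, Module.finrank_fin_fun]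
  have hsurj : Function.Surjective (Xᵀ * X).mulVecLin := LinearMap.range_eq_top.1 htop
  have hinj : Function.Injective (Xᵀ * X).mulVecLin :=
    (LinearMap.injective_iff_surjective).2 hsurj
  exact Matrix.mulVec_injective_iff_isUnit.1 hinj


lemma slln_aux {Ω : Type*} [MeasurableSpace Ω] (μ : Measure Ω) [IsProbabilityMeasure μ]
    {N : ℕ} (π : Fin N → ℝ) (hπpos : ∀ j, 0 < π j)
    (I : ℕ → Ω → Fin N) (hmeas : ∀ i, Measurable (I i))
    (hindep : iIndepFun I μ)
    (hdist : ∀ i j, μ (I i ⁻¹' {j}) = ENNReal.ofReal (π j)) (j : Fin N) :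
    ∀ᵐ ω ∂μ, Tendsto
      (fun r : ℕ => (1 / (r : ℝ)) * ∑ i ∈ Finset.range r, (if I i ω = j then 1 / π j else 0))
      atTop (nhds 1) := by
  set g : Fin N → ℝ := fun k => if k = j then 1 / π j else 0 with hg
  set f : ℕ → Ω → ℝ := fun i ω => if I i ω = j then 1 / π j else 0 with hf
  have hgm : Measurable g := .of_discrete
  have hf0 : f 0 = (I 0 ⁻¹' {j}).indicator (fun _ => 1 / π j) := by
    funext ω
    by_cases h : I 0 ω = j <;>
      simp [hf, Set.indicator_apply, Set.mem_preimage, Set.mem_singleton_iff, h]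
  have hint : Integrable (f 0) μ := by
    rw [hf0]
    exact (integrable_const _).indicator ((hmeas 0) (measurableSet_singleton j))
  have hpind : Pairwise (Function.onFun (IndepFun · · μ) f) := fun i k hik =>
    (hindep.indepFun hik).comp hgm hgm
  have hmapeq : ∀ i, Measure.map (I i) μ = Measure.map (I 0) μ := fun i => by
    apply Measure.ext_iff_singleton.2
    intro a
    rw [Measure.map_apply (hmeas i) (measurableSet_singleton a),
      Measure.map_apply (hmeas 0) (measurableSet_singleton a), hdist, hdist]
  have hident : ∀ i, IdentDistrib (f i) (f 0) μ μ := fun i =>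
    IdentDistrib.comp ⟨(hmeas i).aemeasurable, (hmeas 0).aemeasurable, hmapeq i⟩ hgm
  have hmean : (∫ ω, f 0 ω ∂μ) = 1 := by
    rw [hf0, integral_indicator_const _ ((hmeas 0) (measurableSet_singleton j)),
      measureReal_def, hdist 0 j, ENNReal.toReal_ofReal (hπpos j).le, smul_eq_mul, mul_one_div,
      div_self (hπpos j).ne']
  have hsl := strong_law_ae_real f hint hpind hident
  filter_upwards [hsl] with ω hω
  rw [hmean] at hω
  have heq : (fun r : ℕ =>
      (1 / (r : ℝ)) * ∑ i ∈ Finset.range r, (if I i ω = j then 1 / π j else 0))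
      = fun r : ℕ => (∑ i ∈ Finset.range r, f i ω) / (r : ℝ) := by
    funext r
    rw [one_div_mul_eq_div]
  rw [heq]
  exact hω


lemma det_aux {N p : ℕ} (X : Matrix (Fin N) (Fin p) ℝ) (hX : IsUnit (Xᵀ * X))
    (Y ε : Fin N → ℝ) (v : ℕ → Fin N → ℝ)
    (hv : Tendsto v atTop (nhds 1)) :
    (∀ j : Fin p,
        Tendsto
          (fun r : ℕ =>
            ((Xᵀ * Matrix.diagonal (fun i => v r i) * X)⁻¹ * Xᵀ
              * Matrix.diagonal (fun i => v r i)).mulVec Y j)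
          atTop (nhds (((Xᵀ * X)⁻¹ * Xᵀ).mulVec Y j))) ∧
      Tendsto
        (fun r : ℕ =>
          ∑ i, (((1 - X * (Xᵀ * Matrix.diagonal (fun i => v r i) * X)⁻¹ * Xᵀ
            * Matrix.diagonal (fun i => v r i)).mulVec ε) i) ^ 2)
        atTop
        (nhds (∑ i, (((1 - X * (Xᵀ * X)⁻¹ * Xᵀ).mulVec ε) i) ^ 2)) ∧
      (∀ j : Fin p,
        Tendsto
          (fun r : ℕ =>
            ((Xᵀ * Matrix.diagonal (fun i => v r i) * X)⁻¹ * Xᵀ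
              * (Matrix.diagonal (fun i => v r i) * Matrix.diagonal (fun i => v r i))
              * X * (Xᵀ * Matrix.diagonal (fun i => v r i) * X)⁻¹) j j)
          atTop (nhds ((Xᵀ * X)⁻¹ j j))) := by
  have hdet : IsUnit (Xᵀ * X).det := (Matrix.isUnit_iff_isUnit_det _).1 hX
  have hdiag1 : Matrix.diagonal (fun i : Fin N => (1 : Fin N → ℝ) i) = 1 := by
    simp [Matrix.diagonal_one]
  -- convergence of Xᵀ W X
  have hA : Tendsto (fun r => Xᵀ * Matrix.diagonal (fun i => v r i) * X) atTop
      (nhds (Xᵀ * X)) := by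
    have hc : Continuous fun u : Fin N → ℝ => Xᵀ * Matrix.diagonal (fun i => u i) * X :=
      (continuous_const.matrix_mul continuous_id.matrix_diagonal).matrix_mul continuous_const
    have h := (hc.tendsto 1).comp hv
    simpa [hdiag1, Function.comp_def] using h
  -- convergence of (Xᵀ W X)⁻¹
  obtain ⟨u0, hu0⟩ := hdet
  have hcinv : ContinuousAt Inv.inv (Xᵀ * X) :=
    continuousAt_matrix_inv _ (hu0 ▸ NormedRing.inverse_continuousAt u0)
  have hTinv : Tendsto (fun r => (Xᵀ * Matrix.diagonal (fun i => v r i) * X)⁻¹) atTop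
      (nhds ((Xᵀ * X)⁻¹)) := hcinv.tendsto.comp hA
  have hP : Tendsto (fun r => ((Xᵀ * Matrix.diagonal (fun i => v r i) * X)⁻¹, v r)) atTop
      (nhds ((Xᵀ * X)⁻¹, 1)) := hTinv.prodMk_nhds hv
  refine ⟨fun j => ?_, ?_, fun j => ?_⟩
  · have hG : Continuous fun q : Matrix (Fin p) (Fin p) ℝ × (Fin N → ℝ) =>
        ((q.1 * Xᵀ * Matrix.diagonal (fun i => q.2 i)).mulVec Y) j :=
      (continuous_apply j).comp
        (((continuous_fst.matrix_mul continuous_const).matrix_mul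
          continuous_snd.matrix_diagonal).matrix_mulVec continuous_const)
    have h := (hG.tendsto _).comp hP
    simpa [hdiag1, Function.comp_def] using h
  · have hG : Continuous fun q : Matrix (Fin p) (Fin p) ℝ × (Fin N → ℝ) =>
        ∑ i, (((1 - X * q.1 * Xᵀ * Matrix.diagonal (fun i => q.2 i)).mulVec ε) i) ^ 2 := by
      have hm : Continuous fun q : Matrix (Fin p) (Fin p) ℝ × (Fin N → ℝ) =>
          (1 - X * q.1 * Xᵀ * Matrix.diagonal (fun i => q.2 i)).mulVec ε :=
        (continuous_const.sub (((continuous_const.matrix_mul continuous_fst).matrix_mul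
          continuous_const).matrix_mul continuous_snd.matrix_diagonal)).matrix_mulVec
          continuous_const
      exact continuous_finset_sum _ fun i _ => ((continuous_apply i).comp hm).pow 2
    have h := (hG.tendsto _).comp hP
    simpa [hdiag1, Function.comp_def] using h
  · have hG : Continuous fun q : Matrix (Fin p) (Fin p) ℝ × (Fin N → ℝ) =>
        (q.1 * Xᵀ * (Matrix.diagonal (fun i => q.2 i) * Matrix.diagonal (fun i => q.2 i))
          * X * q.1) j j :=
      ((((continuous_fst.matrix_mul continuous_const).matrix_mul
        (continuous_snd.matrix_diagonal.matrix_mul continuous_snd.matrix_diagonal)).matrix_mul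
        continuous_const).matrix_mul continuous_fst).matrix_elem j j
    have h := (hG.tendsto _).comp hP
    have hval : ((Xᵀ * X)⁻¹ * Xᵀ * ((1 : Matrix (Fin N) (Fin N) ℝ) * 1) * X * (Xᵀ * X)⁻¹)
        = (Xᵀ * X)⁻¹ := by
      rw [one_mul (1 : Matrix (Fin N) (Fin N) ℝ), Matrix.mul_one ((Xᵀ * X)⁻¹ * Xᵀ),
        Matrix.mul_assoc ((Xᵀ * X)⁻¹) Xᵀ X,
        Matrix.nonsing_inv_mul _ ((Matrix.isUnit_iff_isUnit_det _).1 hX), one_mul]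
    simp only [hdiag1] at h
    rw [hval] at h
    exact h

/-- With leverage weights `w r j = (1/r) ∑_{i<r} 1{I i = j}/π j` for i.i.d.
sample indices with `P(I i = j) = π j > 0`, `W_r = diag(w r)`, `X` of full column rank
`p`, and deterministic `Y = Xβ + ε`, almost surely as `r → ∞`:
(i) `β̂_{W_r} = (Xᵀ W_r X)⁻¹ Xᵀ W_r Y → β̂_OLS = (Xᵀ X)⁻¹ Xᵀ Y` coordinatewise;
(ii) `‖(I - H_{W_r}) ε‖₂² → ‖(I - H) ε‖₂²` where `H_W = X (Xᵀ W X)⁻¹ Xᵀ W` and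
`H = X (Xᵀ X)⁻¹ Xᵀ`;
(iii) `(V_r)_{jj} → ((Xᵀ X)⁻¹)_{jj}` for each `j`, where
`V_r = (Xᵀ W_r X)⁻¹ Xᵀ W_r² X (Xᵀ W_r X)⁻¹`. -/
theorem leveraging_quantities_tendsto_ols_quantities
    {Ω : Type*} [MeasurableSpace Ω] (μ : Measure Ω) [IsProbabilityMeasure μ]
    (N p : ℕ) (hN : 0 < N) (hNp : p ≤ N)
    (X : Matrix (Fin N) (Fin p) ℝ) (hrank : X.rank = p)
    (β : Fin p → ℝ) (ε : Fin N → ℝ) (Y : Fin N → ℝ) (hY : Y = X.mulVec β + ε)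
    (π : Fin N → ℝ) (hπpos : ∀ j, 0 < π j) (hπsum : ∑ j, π j = 1)
    (I : ℕ → Ω → Fin N)
    (hmeas : ∀ i, Measurable (I i))
    (hindep : iIndepFun I μ)
    (hdist : ∀ i j, μ (I i ⁻¹' {j}) = ENNReal.ofReal (π j))
    (w : ℕ → Fin N → Ω → ℝ)
    (hw : ∀ r j ω,
      w r j ω = (1 / (r : ℝ)) * ∑ i ∈ Finset.range r, (if I i ω = j then 1 / π j else 0)) :
    ∀ᵐ ω ∂μ,
      (∀ j : Fin p,
        Tendsto
          (fun r : ℕ =>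
            ((Xᵀ * Matrix.diagonal (fun i => w r i ω) * X)⁻¹ * Xᵀ
              * Matrix.diagonal (fun i => w r i ω)).mulVec Y j)
          atTop (nhds (((Xᵀ * X)⁻¹ * Xᵀ).mulVec Y j))) ∧
      Tendsto
        (fun r : ℕ =>
          ∑ i, (((1 - X * (Xᵀ * Matrix.diagonal (fun i => w r i ω) * X)⁻¹ * Xᵀ
            * Matrix.diagonal (fun i => w r i ω)).mulVec ε) i) ^ 2)
        atTop
        (nhds (∑ i, (((1 - X * (Xᵀ * X)⁻¹ * Xᵀ).mulVec ε) i) ^ 2)) ∧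
      (∀ j : Fin p,
        Tendsto
          (fun r : ℕ =>
            ((Xᵀ * Matrix.diagonal (fun i => w r i ω) * X)⁻¹ * Xᵀ
              * (Matrix.diagonal (fun i => w r i ω) * Matrix.diagonal (fun i => w r i ω))
              * X * (Xᵀ * Matrix.diagonal (fun i => w r i ω) * X)⁻¹) j j)
          atTop (nhds ((Xᵀ * X)⁻¹ j j))) := by
  have hXunit : IsUnit (Xᵀ * X) := isUnit_XtX X hrank
  have key : ∀ᵐ ω ∂μ, ∀ j : Fin N, Tendsto (fun r : ℕ => w r j ω) atTop (nhds 1) := by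
    rw [ae_all_iff]
    intro j
    filter_upwards [slln_aux μ π hπpos I hmeas hindep hdist j] with ω hω
    have heq : (fun r : ℕ => w r j ω) = fun r : ℕ =>
        (1 / (r : ℝ)) * ∑ i ∈ Finset.range r, (if I i ω = j then 1 / π j else 0) := by
      funext r; rw [hw]
    rw [heq]
    exact hω
  filter_upwards [key] with ω hω
  have hv : Tendsto (fun r : ℕ => fun i => w r i ω) atTop (nhds (1 : Fin N → ℝ)) :=
    tendsto_pi_nhds.2 fun i => by simpa using hω i
  exact det_aux X hXunit Y ε (fun r i => w r i ω) hv
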